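/- The function W : V^m×V→ℝ defined by W(s)=γ^{D(s)} is the unique real-valued function on V^m×V satisfying the Bellman minimax equations: W(s)=1 whenever f(s)=1, and W(s)=γ·max_{n_p∈N[s_p]} min_{n_e∈N[s_e]} W(n_p,n_e) whenever f(s)=0. -/

import Mathlib

open scoped ENat

/-- Closed neighborhood `N[v]`: stay at `v` or cross one edge of `G`. -/
def closedNbr {V : Type*} (G : SimpleGraph V) (v : V) : Set V :=
  {u | u = v ∨ G.Adj v u}

/-- Joint pursuer moves: all `m` pursuers move simultaneously, each within a
closed neighborhood. -/
def jointNbr {V : Type*} (G : SimpleGraph V) {m : ℕ} (sp : Fin m → V) :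
    Set (Fin m → V) :=
  {np | ∀ i, np i ∈ closedNbr G (sp i)}

/-- Capture sets `C_k`: `C_0 = {s | f s = 1}` and
`C_{k+1} = C_k ∪ {(s_p,s_e) | ∃ n_p ∈ N[s_p], ∀ n_e ∈ N[s_e], (n_p,n_e) ∈ C_k}`. -/
def captureSet {V : Type*} (G : SimpleGraph V) {m : ℕ}
    (f : (Fin m → V) × V → Bool) : ℕ → Set ((Fin m → V) × V)
  | 0 => {s | f s = true}
  | k + 1 => captureSet G f k ∪
      {s | ∃ np ∈ jointNbr G s.1, ∀ ne ∈ closedNbr G s.2, (np, ne) ∈ captureSet G f k}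

/-- The distance table `D(s) = min {k | s ∈ C_k}` (and `∞` if `s` lies in no `C_k`). -/
noncomputable def Dtab {V : Type*} (G : SimpleGraph V) {m : ℕ}
    (f : (Fin m → V) × V → Bool) (s : (Fin m → V) × V) : ℕ∞ :=
  sInf {k : ℕ∞ | ∃ n : ℕ, k = n ∧ s ∈ captureSet G f n}

/-- `γ^d` for `d ∈ ℕ∪{∞}`, with the convention `γ^∞ = 0`. -/
noncomputable def gpow (γ : ℝ) (d : ℕ∞) : ℝ :=
  if d = ⊤ then 0 else γ ^ d.toNat

section auxlemmas

variable {V : Type*} {β : Type*}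

lemma mem_closedNbr_self (G : SimpleGraph V) (v : V) : v ∈ closedNbr G v := Or.inl rfl

lemma mem_jointNbr_self (G : SimpleGraph V) {m : ℕ} (sp : Fin m → V) :
    sp ∈ jointNbr G sp := fun _ => Or.inl rfl

lemma setOf_eq_image (A : Set β) (u : β → ℝ) : {y : ℝ | ∃ a ∈ A, y = u a} = u '' A := by
  ext y; simp [Set.mem_image, eq_comm]

lemma gpow_nonneg {γ : ℝ} (h : 0 ≤ γ) (d : ℕ∞) : 0 ≤ gpow γ d := by
  unfold gpow; split
  · exact le_refl 0
  · exact pow_nonneg h _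

lemma gpow_zero (γ : ℝ) : gpow γ 0 = 1 := by
  simp [gpow]

lemma gpow_succ (γ : ℝ) (d : ℕ∞) : gpow γ (d + 1) = γ * gpow γ d := by
  rcases eq_or_ne d ⊤ with rfl | h
  · simp [gpow]
  · lift d to ℕ using h
    have h1 : ((d : ℕ∞) + 1) = ((d + 1 : ℕ) : ℕ∞) := by push_cast; ring
    rw [h1]
    simp only [gpow, ENat.coe_ne_top, if_false, ENat.toNat_coe]
    rw [pow_succ, mul_comm]

lemma gpow_anti {γ : ℝ} (h0 : 0 ≤ γ) (h1 : γ ≤ 1) : Antitone (gpow γ) := by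
  intro d d' hdd'
  unfold gpow
  rcases eq_or_ne d' ⊤ with rfl | h'
  · rw [if_pos rfl]; split
    · exact le_refl 0
    · exact pow_nonneg h0 _
  · have hd : d ≠ ⊤ := fun hc => h' (top_le_iff.mp (hc ▸ hdd'))
    rw [if_neg h', if_neg hd]
    exact pow_le_pow_of_le_one h0 h1 (ENat.toNat_le_toNat hdd' h')

lemma sInf_gpow_image {γ : ℝ} (h0 : 0 ≤ γ) (h1 : γ ≤ 1) {A : Set β} (hfin : A.Finite)
    (hne : A.Nonempty) (d : β → ℕ∞) :
    sInf {y : ℝ | ∃ a ∈ A, y = gpow γ (d a)} = gpow γ (sSup (d '' A)) := by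
  rw [setOf_eq_image]
  obtain ⟨a0, ha0, hda0⟩ := (hne.image d).csSup_mem (hfin.image d)
  apply le_antisymm
  · exact csInf_le ((hfin.image _).bddBelow) ⟨a0, ha0, congrArg (gpow γ) hda0⟩
  · refine le_csInf (hne.image _) ?_
    rintro y ⟨a, ha, rfl⟩
    exact gpow_anti h0 h1 (le_sSup ⟨a, ha, rfl⟩)

lemma sSup_gpow_image {γ : ℝ} (h0 : 0 ≤ γ) (h1 : γ ≤ 1) {A : Set β} (hfin : A.Finite)
    (hne : A.Nonempty) (d : β → ℕ∞) :
    sSup {y : ℝ | ∃ a ∈ A, y = gpow γ (d a)} = gpow γ (sInf (d '' A)) := by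
  rw [setOf_eq_image]
  obtain ⟨a0, ha0, hda0⟩ := (hne.image d).csInf_mem (hfin.image d)
  apply le_antisymm
  · refine csSup_le (hne.image _) ?_
    rintro y ⟨a, ha, rfl⟩
    exact gpow_anti h0 h1 (sInf_le ⟨a, ha, rfl⟩)
  · exact le_csSup ((hfin.image _).bddAbove) ⟨a0, ha0, congrArg (gpow γ) hda0⟩

lemma sInf_le_sInf_add {A : Set β} (hfin : A.Finite) (hne : A.Nonempty) {u w : β → ℝ} {M : ℝ}
    (h : ∀ a ∈ A, u a ≤ w a + M) :
    sInf {y : ℝ | ∃ a ∈ A, y = u a} ≤ sInf {y : ℝ | ∃ a ∈ A, y = w a} + M := by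
  rw [setOf_eq_image, setOf_eq_image]
  obtain ⟨a0, ha0, hwa0⟩ := (hne.image w).csInf_mem (hfin.image w)
  calc sInf (u '' A) ≤ u a0 := csInf_le ((hfin.image _).bddBelow) ⟨a0, ha0, rfl⟩
    _ ≤ w a0 + M := h a0 ha0
    _ = sInf (w '' A) + M := by rw [hwa0]

lemma sSup_le_sSup_add {A : Set β} (hfin : A.Finite) (hne : A.Nonempty) {u w : β → ℝ} {M : ℝ}
    (h : ∀ a ∈ A, u a ≤ w a + M) :
    sSup {y : ℝ | ∃ a ∈ A, y = u a} ≤ sSup {y : ℝ | ∃ a ∈ A, y = w a} + M := by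
  rw [setOf_eq_image, setOf_eq_image]
  obtain ⟨a0, ha0, hua0⟩ := (hne.image u).csSup_mem (hfin.image u)
  calc sSup (u '' A) = u a0 := hua0.symm
    _ ≤ w a0 + M := h a0 ha0
    _ ≤ sSup (w '' A) + M := by
        have := le_csSup ((hfin.image w).bddAbove) (⟨a0, ha0, rfl⟩ : w a0 ∈ w '' A)
        linarith

lemma abs_sInf_sub {A : Set β} (hfin : A.Finite) (hne : A.Nonempty) {u w : β → ℝ} {M : ℝ}
    (h : ∀ a ∈ A, |u a - w a| ≤ M) :
    |sInf {y : ℝ | ∃ a ∈ A, y = u a} - sInf {y : ℝ | ∃ a ∈ A, y = w a}| ≤ M := by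
  rw [abs_sub_le_iff]
  constructor
  · have := sInf_le_sInf_add hfin hne (u := u) (w := w) (M := M)
      (fun a ha => by have := (abs_sub_le_iff.mp (h a ha)).1; linarith)
    linarith
  · have := sInf_le_sInf_add hfin hne (u := w) (w := u) (M := M)
      (fun a ha => by have := (abs_sub_le_iff.mp (h a ha)).2; linarith)
    linarith

lemma abs_sSup_sub {A : Set β} (hfin : A.Finite) (hne : A.Nonempty) {u w : β → ℝ} {M : ℝ}
    (h : ∀ a ∈ A, |u a - w a| ≤ M) :
    |sSup {y : ℝ | ∃ a ∈ A, y = u a} - sSup {y : ℝ | ∃ a ∈ A, y = w a}| ≤ M := by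
  rw [abs_sub_le_iff]
  constructor
  · have := sSup_le_sSup_add hfin hne (u := u) (w := w) (M := M)
      (fun a ha => by have := (abs_sub_le_iff.mp (h a ha)).1; linarith)
    linarith
  · have := sSup_le_sSup_add hfin hne (u := w) (w := u) (M := M)
      (fun a ha => by have := (abs_sub_le_iff.mp (h a ha)).2; linarith)
    linarith

lemma captureSet_mono (G : SimpleGraph V) {m : ℕ} (f : (Fin m → V) × V → Bool) :
    Monotone (captureSet G f) :=
  monotone_nat_of_le_succ (fun _ => Set.subset_union_left)

lemma Dtab_le_iff (G : SimpleGraph V) {m : ℕ} (f : (Fin m → V) × V → Bool)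
    (s : (Fin m → V) × V) (k : ℕ) :
    Dtab G f s ≤ (k : ℕ∞) ↔ s ∈ captureSet G f k := by
  constructor
  · intro h
    have hne : {k' : ℕ∞ | ∃ n : ℕ, k' = n ∧ s ∈ captureSet G f n}.Nonempty := by
      by_contra hc
      rw [Set.not_nonempty_iff_eq_empty] at hc
      rw [Dtab, hc, sInf_empty] at h
      exact (ENat.coe_lt_top k).not_ge h
    obtain ⟨n, hn, hmem⟩ := csInf_mem hne
    rw [Dtab, hn] at h
    exact captureSet_mono G f (by exact_mod_cast h) hmem
  · intro h
    exact sInf_le ⟨k, rfl, h⟩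

lemma Dtab_rec (G : SimpleGraph V) {m : ℕ} (f : (Fin m → V) × V → Bool)
    {s : (Fin m → V) × V} (hs : f s = false) :
    Dtab G f s =
      sInf ((fun np => sSup ((fun ne => Dtab G f (np, ne)) '' closedNbr G s.2)) ''
        jointNbr G s.1) + 1 := by
  set E := sInf ((fun np => sSup ((fun ne => Dtab G f (np, ne)) '' closedNbr G s.2)) ''
        jointNbr G s.1) with hE
  have hJ : (jointNbr G s.1).Nonempty := ⟨s.1, mem_jointNbr_self G s.1⟩
  apply le_antisymm
  · rcases eq_or_ne E ⊤ with hEt | hEt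
    · rw [hEt]; simp
    · obtain ⟨k, hk⟩ : ∃ k : ℕ, (k : ℕ∞) = E := ⟨E.toNat, ENat.coe_toNat hEt⟩
      obtain ⟨np0, hnp0, hnp0E⟩ := csInf_mem (hJ.image
        (fun np => sSup ((fun ne => Dtab G f (np, ne)) '' closedNbr G s.2)))
      have hnp0E' : sSup ((fun ne => Dtab G f (np0, ne)) '' closedNbr G s.2) = E := hnp0E
      have hmem : s ∈ captureSet G f (k + 1) := by
        refine Or.inr ⟨np0, hnp0, fun ne hne => ?_⟩
        refine (Dtab_le_iff G f (np0, ne) k).mp ?_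
        rw [← hk] at hnp0E'
        rw [← hnp0E']
        exact le_sSup ⟨ne, hne, rfl⟩
      have hle := (Dtab_le_iff G f s (k + 1)).mpr hmem
      calc Dtab G f s ≤ ((k + 1 : ℕ) : ℕ∞) := hle
        _ = (k : ℕ∞) + 1 := by push_cast; ring
        _ = E + 1 := by rw [hk]
  · rcases eq_or_ne (Dtab G f s) ⊤ with hDt | hDt
    · rw [hDt]; exact le_top
    · obtain ⟨n, hn⟩ : ∃ n : ℕ, (n : ℕ∞) = Dtab G f s :=
        ⟨(Dtab G f s).toNat, ENat.coe_toNat hDt⟩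
      have hmemn : s ∈ captureSet G f n := (Dtab_le_iff G f s n).mp (le_of_eq hn.symm)
      cases n with
      | zero =>
        exfalso
        simp only [captureSet, Set.mem_setOf_eq] at hmemn
        rw [hs] at hmemn
        exact Bool.false_ne_true hmemn
      | succ k =>
        simp only [captureSet, Set.mem_union, Set.mem_setOf_eq] at hmemn
        rcases hmemn with hC | ⟨np, hnp, hall⟩
        · exfalso
          have h1 : Dtab G f s ≤ (k : ℕ∞) := (Dtab_le_iff G f s k).mpr hC
          rw [← hn] at h1
          have : (k + 1 : ℕ) ≤ k := by exact_mod_cast h1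
          omega
        · have h1 : sSup ((fun ne => Dtab G f (np, ne)) '' closedNbr G s.2) ≤ (k : ℕ∞) := by
            apply sSup_le
            rintro y ⟨ne, hne, rfl⟩
            exact (Dtab_le_iff G f (np, ne) k).mpr (hall ne hne)
          have h2 : E ≤ (k : ℕ∞) := le_trans (sInf_le ⟨np, hnp, rfl⟩) h1
          rw [← hn]
          calc E + 1 ≤ (k : ℕ∞) + 1 := add_le_add h2 le_rfl
            _ = ((k + 1 : ℕ) : ℕ∞) := by push_cast; ring

lemma Wstar_true (G : SimpleGraph V) {m : ℕ} (f : (Fin m → V) × V → Bool) (γ : ℝ)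
    {s : (Fin m → V) × V} (hs : f s = true) :
    gpow γ (Dtab G f s) = 1 := by
  have h0 : s ∈ captureSet G f 0 := hs
  have h1 : Dtab G f s ≤ ((0 : ℕ) : ℕ∞) := (Dtab_le_iff G f s 0).mpr h0
  have h2 : Dtab G f s = 0 := le_antisymm (by simpa using h1) zero_le
  rw [h2, gpow_zero]

lemma Wstar_false (G : SimpleGraph V) {m : ℕ} (f : (Fin m → V) × V → Bool) {γ : ℝ}
    (h0 : 0 ≤ γ) (h1 : γ ≤ 1) {s : (Fin m → V) × V} (hs : f s = false)
    [Fintype V] :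
    gpow γ (Dtab G f s) = γ * sSup {x : ℝ | ∃ np ∈ jointNbr G s.1,
      x = sInf {y : ℝ | ∃ ne ∈ closedNbr G s.2, y = gpow γ (Dtab G f (np, ne))}} := by
  have hA : (closedNbr G s.2).Nonempty := ⟨s.2, mem_closedNbr_self G s.2⟩
  have hJ : (jointNbr G s.1).Nonempty := ⟨s.1, mem_jointNbr_self G s.1⟩
  have hinner : ∀ np, sInf {y : ℝ | ∃ ne ∈ closedNbr G s.2, y = gpow γ (Dtab G f (np, ne))}
      = gpow γ (sSup ((fun ne => Dtab G f (np, ne)) '' closedNbr G s.2)) :=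
    fun np => sInf_gpow_image h0 h1 (Set.toFinite _) hA _
  have hset : {x : ℝ | ∃ np ∈ jointNbr G s.1,
        x = sInf {y : ℝ | ∃ ne ∈ closedNbr G s.2, y = gpow γ (Dtab G f (np, ne))}} =
      {x : ℝ | ∃ np ∈ jointNbr G s.1,
        x = gpow γ ((fun np => sSup ((fun ne => Dtab G f (np, ne)) '' closedNbr G s.2)) np)} := by
    ext x
    constructor
    · rintro ⟨np, hnp, rfl⟩; exact ⟨np, hnp, by rw [hinner]⟩
    · rintro ⟨np, hnp, rfl⟩; exact ⟨np, hnp, by rw [hinner]⟩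
  rw [hset, sSup_gpow_image h0 h1 (Set.toFinite _) hJ, Dtab_rec G f hs, gpow_succ]

end auxlemmas

/-- The function `W(s) = γ^{D(s)}` is the unique real-valued function on states
satisfying the Bellman minimax equations: `W(s) = 1` whenever `f(s) = 1`, and
`W(s) = γ · max_{n_p ∈ N[s_p]} min_{n_e ∈ N[s_e]} W(n_p,n_e)` whenever `f(s) = 0`. -/
theorem bellman_unique_solution {V : Type*} [Fintype V] (G : SimpleGraph V)
    (m : ℕ) (hm : 1 ≤ m) (f : (Fin m → V) × V → Bool)
    (γ : ℝ) (hγ0 : 0 < γ) (hγ1 : γ < 1) (W : (Fin m → V) × V → ℝ) :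
    ((∀ s, f s = true → W s = 1) ∧
      (∀ s : (Fin m → V) × V, f s = false →
        W s = γ * sSup {x : ℝ | ∃ np ∈ jointNbr G s.1,
          x = sInf {y : ℝ | ∃ ne ∈ closedNbr G s.2, y = W (np, ne)}})) ↔
    W = fun s => gpow γ (Dtab G f s) := by
  constructor
  · rintro ⟨h1f, h0f⟩
    set Ws : (Fin m → V) × V → ℝ := fun s => gpow γ (Dtab G f s) with hWs
    rcases isEmpty_or_nonempty ((Fin m → V) × V) with hE | hNE
    · funext s; exact (hE.false s).elim
    obtain ⟨s0, _, hs0⟩ := Finset.exists_max_image Finset.univ (fun s => |W s - Ws s|)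
      ⟨Classical.arbitrary _, Finset.mem_univ _⟩
    set M := |W s0 - Ws s0| with hMdef
    have hM : ∀ s, |W s - Ws s| ≤ M := fun s => hs0 s (Finset.mem_univ s)
    have hM0 : M ≤ 0 := by
      by_cases hb : f s0 = true
      · have e1 := h1f s0 hb
        have e2 : Ws s0 = 1 := Wstar_true G f γ hb
        simp [hMdef, e1, e2]
      · have hb' : f s0 = false := by simpa using hb
        have e1 := h0f s0 hb'
        have e2 : Ws s0 = γ * sSup {x : ℝ | ∃ np ∈ jointNbr G s0.1,
            x = sInf {y : ℝ | ∃ ne ∈ closedNbr G s0.2, y = Ws (np, ne)}} :=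
          Wstar_false G f hγ0.le hγ1.le hb'
        have key : |W s0 - Ws s0| ≤ γ * M := by
          rw [e1, e2, ← mul_sub, abs_mul, abs_of_pos hγ0]
          refine mul_le_mul_of_nonneg_left ?_ hγ0.le
          refine abs_sSup_sub (Set.toFinite _) ⟨s0.1, mem_jointNbr_self G s0.1⟩
            (u := fun np => sInf {y : ℝ | ∃ ne ∈ closedNbr G s0.2, y = W (np, ne)})
            (w := fun np => sInf {y : ℝ | ∃ ne ∈ closedNbr G s0.2, y = Ws (np, ne)}) ?_
          intro np _
          refine abs_sInf_sub (Set.toFinite _) ⟨s0.2, mem_closedNbr_self G s0.2⟩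
            (u := fun ne => W (np, ne)) (w := fun ne => Ws (np, ne)) ?_
          intro ne _
          exact hM (np, ne)
        have key2 : M ≤ γ * M := by rw [hMdef]; exact key
        nlinarith [abs_nonneg (W s0 - Ws s0)]
    funext s
    have h1 := hM s
    have h2 : |W s - Ws s| = 0 := le_antisymm (h1.trans hM0) (abs_nonneg _)
    have h3 := abs_eq_zero.mp h2
    have h4 : W s = Ws s := by linarith [sub_eq_zero.mp h3]
    exact h4
  · rintro rfl
    refine ⟨fun s hs => Wstar_true G f γ hs, fun s hs => Wstar_false G f hγ0.le hγ1.le hs⟩
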